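/- Fix real numbers a > 0 and ε > 0. Define the billiard-reflection map r : ℝ → [−a, a] as follows: r is the unique continuous map that agrees with the identity on [−a, a] and satisfies r(x) = r(2a − x) for x ≥ a and r(x) = r(−2a − x) for x ≤ −a (equivalently, r(x) = |((x + a) mod 4a) − 2a| − a). Let X be a random variable uniformly distributed on [−a, a] and let δ be a random variable uniformly distributed on [−ε, ε], independent of X. Then r(X + δ) is uniformly distributed on [−a, a]. -/

import Mathlib

open MeasureTheory ProbabilityTheory ENNReal

section Aux

variable {a : ℝ} {r : ℝ → ℝ}

lemma br_refl_all (hr_id : ∀ x ∈ Set.Icc (-a) a, r x = x)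
    (hr_right : ∀ x, a ≤ x → r x = r (2 * a - x)) :
    ∀ x, r x = r (2 * a - x) := by
  intro x
  rcases le_total a x with h | h
  · exact hr_right x h
  · have h2 : a ≤ 2 * a - x := by linarith
    have := hr_right _ h2
    rw [this]; ring_nf

lemma br_refl_neg_all (hr_id : ∀ x ∈ Set.Icc (-a) a, r x = x)
    (hr_left : ∀ x, x ≤ -a → r x = r (-(2 * a) - x)) :
    ∀ x, r x = r (-(2 * a) - x) := by
  intro x
  rcases le_total x (-a) with h | h
  · exact hr_left x h
  · have h2 : -(2 * a) - x ≤ -a := by linarith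
    have := hr_left _ h2
    rw [this]; ring_nf

lemma br_periodic (hr_id : ∀ x ∈ Set.Icc (-a) a, r x = x)
    (hr_right : ∀ x, a ≤ x → r x = r (2 * a - x))
    (hr_left : ∀ x, x ≤ -a → r x = r (-(2 * a) - x)) :
    Function.Periodic r (4 * a) := by
  intro x
  have h1 := br_refl_all hr_id hr_right (x + 4 * a)
  have h2 := br_refl_neg_all hr_id hr_left x
  have : 2 * a - (x + 4 * a) = -(2 * a) - x := by ring
  rw [h1, this, ← h2]

/-- Measure of a periodic set in any period window is the same as in the canonical window. -/
lemma br_per_meas (ha : 0 < a) (S : Set ℝ) (hS : MeasurableSet S)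
    (hper : ∀ x, x + 4 * a ∈ S ↔ x ∈ S) (c : ℝ) :
    volume (S ∩ Set.Ioc c (c + 4 * a)) = volume (S ∩ Set.Ioc (-a) (3 * a)) := by
  have hpre : (fun x => x + 4 * a) ⁻¹' S = S := by
    ext x; exact hper x
  have hshift : ∀ (u v : ℝ), volume (S ∩ Set.Ioc (u - 4 * a) (v - 4 * a))
      = volume (S ∩ Set.Ioc u v) := by
    intro u v
    have := measure_preimage_add_right (volume : Measure ℝ) (4 * a) (S ∩ Set.Ioc u v)
    rw [Set.preimage_inter, hpre, Set.preimage_add_const_Ioc] at this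
    exact this
  set g : ℝ → ℝ≥0∞ := fun d => volume (S ∩ Set.Ioc d (d + 4 * a)) with hg
  have hgper : Function.Periodic g (4 * a) := by
    intro d
    have := hshift (d + 4 * a) (d + 4 * a + 4 * a)
    simp only [hg]
    have e1 : d + 4 * a - 4 * a = d := by ring
    have e2 : d + 4 * a + 4 * a - 4 * a = d + 4 * a := by ring
    rw [e1, e2] at this
    exact this.symm
  have h4a : (0:ℝ) < 4 * a := by linarith
  set k : ℤ := ⌊(c + a) / (4 * a)⌋ with hk
  set c' : ℝ := c - k * (4 * a) with hc'
  have hgc : g c = g c' := (hgper.sub_int_mul_eq k).symm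
  have hlb : -a ≤ c' := by
    have h0 : ((k : ℝ)) ≤ (c + a) / (4 * a) := by
      rw [hk]; exact Int.floor_le _
    have h1 : (k : ℝ) * (4 * a) ≤ c + a := by
      rw [← le_div_iff₀ h4a]; exact h0
    simp only [hc']; linarith
  have hub : c' ≤ 3 * a := by
    have h1 : (c + a) / (4 * a) < k + 1 := Int.lt_floor_add_one _
    have h2 : c + a < ((k : ℝ) + 1) * (4 * a) := by
      rw [← div_lt_iff₀ h4a]; exact h1
    simp only [hc']; nlinarith
  have hgoal : g c = g (-a) → volume (S ∩ Set.Ioc c (c + 4 * a)) = volume (S ∩ Set.Ioc (-a) (3 * a)) := by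
    intro h
    have e : -a + 4 * a = 3 * a := by ring
    simpa only [hg, e] using h
  apply hgoal
  rw [hgc]
  -- now show g c' = g (-a), i.e. window measures agree
  show volume (S ∩ Set.Ioc c' (c' + 4 * a)) = volume (S ∩ Set.Ioc (-a) (-a + 4 * a))
  have e : -a + 4 * a = 3 * a := by ring
  rw [e]
  -- split the window [c', c'+4a] at 3a
  have hsplit1 : Set.Ioc c' (c' + 4 * a) = Set.Ioc c' (3 * a) ∪ Set.Ioc (3 * a) (c' + 4 * a) :=
    (Set.Ioc_union_Ioc_eq_Ioc hub (by linarith)).symm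
  have hdisj1 : Disjoint (S ∩ Set.Ioc c' (3 * a)) (S ∩ Set.Ioc (3 * a) (c' + 4 * a)) := by
    refine Set.disjoint_left.2 fun x hx hx' => ?_
    exact absurd hx'.2.1 (not_lt.2 hx.2.2)
  have hmeas2 : MeasurableSet (S ∩ Set.Ioc (3 * a) (c' + 4 * a)) :=
    hS.inter measurableSet_Ioc
  have e1 : volume (S ∩ Set.Ioc c' (c' + 4 * a))
      = volume (S ∩ Set.Ioc c' (3 * a)) + volume (S ∩ Set.Ioc (3 * a) (c' + 4 * a)) := by
    rw [hsplit1, Set.inter_union_distrib_left]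
    exact measure_union hdisj1 hmeas2
  have e2 : volume (S ∩ Set.Ioc (3 * a) (c' + 4 * a)) = volume (S ∩ Set.Ioc (-a) c') := by
    have := hshift (3 * a) (c' + 4 * a)
    have e3 : 3 * a - 4 * a = -a := by ring
    have e4 : c' + 4 * a - 4 * a = c' := by ring
    rw [e3, e4] at this
    exact this.symm
  have hsplit2 : Set.Ioc (-a) c' ∪ Set.Ioc c' (3 * a) = Set.Ioc (-a) (3 * a) :=
    Set.Ioc_union_Ioc_eq_Ioc hlb hub
  have hdisj2 : Disjoint (S ∩ Set.Ioc (-a) c') (S ∩ Set.Ioc c' (3 * a)) := by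
    refine Set.disjoint_left.2 fun x hx hx' => ?_
    exact absurd hx'.2.1 (not_lt.2 hx.2.2)
  have e5 : volume (S ∩ Set.Ioc (-a) (3 * a))
      = volume (S ∩ Set.Ioc (-a) c') + volume (S ∩ Set.Ioc c' (3 * a)) := by
    rw [← hsplit2, Set.inter_union_distrib_left]
    exact measure_union hdisj2 (hS.inter measurableSet_Ioc)
  rw [e1, e2, e5, add_comm]


/-- Pushforward of Lebesgue on the canonical period window under `r`. -/
lemma br_map_canonical (ha : 0 < a)
    (hr_cont : Continuous r)
    (hr_id : ∀ x ∈ Set.Icc (-a) a, r x = x)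
    (hr_right : ∀ x, a ≤ x → r x = r (2 * a - x)) :
    Measure.map r (volume.restrict (Set.Ioc (-a) (3 * a)))
      = (2 : ℝ≥0∞) • volume.restrict (Set.Icc (-a) a) := by
  have hsplit : volume.restrict (Set.Ioc (-a) (3 * a))
      = volume.restrict (Set.Ioc (-a) a) + volume.restrict (Set.Ioc a (3 * a)) := by
    rw [← Measure.restrict_union (Set.Ioc_disjoint_Ioc_of_le le_rfl) measurableSet_Ioc,
      Set.Ioc_union_Ioc_eq_Ioc (by linarith) (by linarith)]
  rw [hsplit, Measure.map_add _ _ hr_cont.measurable]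
  have piece1 : Measure.map r (volume.restrict (Set.Ioc (-a) a))
      = volume.restrict (Set.Ioc (-a) a) := by
    have h : r =ᵐ[volume.restrict (Set.Ioc (-a) a)] id := by
      refine (ae_restrict_iff' measurableSet_Ioc).2 (Filter.Eventually.of_forall ?_)
      intro x hx
      exact hr_id x ⟨le_of_lt hx.1, hx.2⟩
    rw [Measure.map_congr h, Measure.map_id]
  have piece2 : Measure.map r (volume.restrict (Set.Ioc a (3 * a)))
      = volume.restrict (Set.Ico (-a) a) := by
    have h : r =ᵐ[volume.restrict (Set.Ioc a (3 * a))] (fun x => 2 * a - x) := by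
      refine (ae_restrict_iff' measurableSet_Ioc).2 (Filter.Eventually.of_forall ?_)
      intro x hx
      rw [br_refl_all hr_id hr_right x]
      exact hr_id _ ⟨by linarith [hx.2], by linarith [hx.1]⟩
    rw [Measure.map_congr h]
    have hm : Measurable fun x : ℝ => 2 * a - x := by fun_prop
    ext A hA
    rw [Measure.map_apply hm hA,
      Measure.restrict_apply (hm hA),
      Measure.restrict_apply hA]
    have hIoc : Set.Ioc a (3 * a) = (fun x => 2 * a - x) ⁻¹' Set.Ico (-a) a := by
      rw [Set.preimage_const_sub_Ico]
      congr 1 <;> ring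
    rw [hIoc, ← Set.preimage_inter]
    have hcomp : (fun x : ℝ => 2 * a - x) = (fun x : ℝ => 2 * a + x) ∘ Neg.neg := by
      funext x; simp [sub_eq_add_neg]
    rw [hcomp, Set.preimage_comp, Measure.measure_preimage_neg, measure_preimage_add]
  rw [piece1, piece2,
    Measure.restrict_congr_set Ioc_ae_eq_Icc, Measure.restrict_congr_set Ico_ae_eq_Icc,
    two_smul]

lemma br_map_period (ha : 0 < a)
    (hr_cont : Continuous r)
    (hr_id : ∀ x ∈ Set.Icc (-a) a, r x = x)
    (hr_right : ∀ x, a ≤ x → r x = r (2 * a - x))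
    (hr_left : ∀ x, x ≤ -a → r x = r (-(2 * a) - x)) (c : ℝ) :
    Measure.map r (volume.restrict (Set.Ioc c (c + 4 * a)))
      = (2 : ℝ≥0∞) • volume.restrict (Set.Icc (-a) a) := by
  have hper := br_periodic hr_id hr_right hr_left
  ext A hA
  rw [Measure.map_apply hr_cont.measurable hA,
    Measure.restrict_apply (hr_cont.measurable hA)]
  have hSper : ∀ x, x + 4 * a ∈ r ⁻¹' A ↔ x ∈ r ⁻¹' A := by
    intro x
    simp only [Set.mem_preimage, hper x]
  rw [br_per_meas ha _ (hr_cont.measurable hA) hSper c]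
  have := br_map_canonical ha hr_cont hr_id hr_right
  have h2 := congrArg (fun m => m A) this
  simp only [Measure.map_apply hr_cont.measurable hA,
    Measure.restrict_apply (hr_cont.measurable hA)] at h2
  exact h2

lemma br_map_shift (ha : 0 < a)
    (hr_cont : Continuous r)
    (hr_id : ∀ x ∈ Set.Icc (-a) a, r x = x)
    (hr_right : ∀ x, a ≤ x → r x = r (2 * a - x))
    (hr_left : ∀ x, x ≤ -a → r x = r (-(2 * a) - x)) (t : ℝ) :
    Measure.map (fun x => r (x + t)) (volume.restrict (Set.Ioc (-a) (3 * a)))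
      = (2 : ℝ≥0∞) • volume.restrict (Set.Icc (-a) a) := by
  have hcomp : (fun x => r (x + t)) = r ∘ (fun x => x + t) := rfl
  rw [hcomp, ← Measure.map_map hr_cont.measurable (measurable_add_const t)]
  have hmt : Measure.map (fun x => x + t) (volume.restrict (Set.Ioc (-a) (3 * a)))
      = volume.restrict (Set.Ioc (-a + t) ((-a + t) + 4 * a)) := by
    ext A hA
    rw [Measure.map_apply (measurable_add_const t) hA,
      Measure.restrict_apply ((measurable_add_const t) hA),
      Measure.restrict_apply hA]
    have hIoc : Set.Ioc (-a) (3 * a) = (fun x => x + t) ⁻¹' Set.Ioc (-a + t) ((-a + t) + 4 * a) := by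
      rw [Set.preimage_add_const_Ioc]
      congr 1 <;> ring
    rw [hIoc, ← Set.preimage_inter, measure_preimage_add_right]
  rw [hmt]
  exact br_map_period ha hr_cont hr_id hr_right hr_left (-a + t)


lemma br_keyD (ha : 0 < a)
    (hr_cont : Continuous r)
    (hr_id : ∀ x ∈ Set.Icc (-a) a, r x = x)
    (hr_right : ∀ x, a ≤ x → r x = r (2 * a - x))
    (hr_left : ∀ x, x ≤ -a → r x = r (-(2 * a) - x))
    (ν : Measure ℝ) [SFinite ν] (hν : ν Set.univ = 1) :
    Measure.map (fun p : ℝ × ℝ => r (p.1 + p.2))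
        ((volume.restrict (Set.Ioc (-a) (3 * a))).prod ν)
      = (2 : ℝ≥0∞) • volume.restrict (Set.Icc (-a) a) := by
  have hT : Measurable fun p : ℝ × ℝ => r (p.1 + p.2) :=
    hr_cont.measurable.comp (measurable_fst.add measurable_snd)
  ext A hA
  rw [Measure.map_apply hT hA, Measure.prod_apply_symm (hT hA)]
  have hsec : ∀ y : ℝ,
      volume.restrict (Set.Ioc (-a) (3 * a))
          ((fun x => (x, y)) ⁻¹' ((fun p : ℝ × ℝ => r (p.1 + p.2)) ⁻¹' A))
        = ((2 : ℝ≥0∞) • volume.restrict (Set.Icc (-a) a)) A := by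
    intro y
    have h1 : ((fun x => (x, y)) ⁻¹' ((fun p : ℝ × ℝ => r (p.1 + p.2)) ⁻¹' A))
        = (fun x => r (x + y)) ⁻¹' A := rfl
    have hm : Measurable fun x => r (x + y) :=
      hr_cont.measurable.comp (measurable_add_const y)
    rw [h1, ← Measure.map_apply hm hA,
      br_map_shift ha hr_cont hr_id hr_right hr_left y]
  simp_rw [hsec]
  rw [lintegral_const, hν, mul_one]

end Aux

/-- **Reflected uniform perturbations preserve the uniform distribution.**
Let `r : ℝ → [−a, a]` be the (unique) continuous billiard-reflection map: it agrees
with the identity on `[−a, a]`, and satisfies `r x = r (2a − x)` for `x ≥ a` and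
`r x = r (−2a − x)` for `x ≤ −a`.  If `X` is uniformly distributed on `[−a, a]` and
`δ` is uniformly distributed on `[−ε, ε]`, independent of `X`, then `r (X + δ)` is
uniformly distributed on `[−a, a]`. -/
theorem billiard_reflection_preserves_uniform
    {Ω : Type*} [MeasurableSpace Ω] (P : Measure Ω) [IsProbabilityMeasure P]
    (a ε : ℝ) (ha : 0 < a) (hε : 0 < ε)
    (r : ℝ → ℝ)
    (hr_range : ∀ x, r x ∈ Set.Icc (-a) a)
    (hr_cont : Continuous r)
    (hr_id : ∀ x ∈ Set.Icc (-a) a, r x = x)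
    (hr_right : ∀ x, a ≤ x → r x = r (2 * a - x))
    (hr_left : ∀ x, x ≤ -a → r x = r (-(2 * a) - x))
    (X δ : Ω → ℝ) (hX : Measurable X) (hδ : Measurable δ)
    (hXδ : IndepFun X δ P)
    (hXunif : Measure.map X P =
      (ENNReal.ofReal (2 * a))⁻¹ • volume.restrict (Set.Icc (-a) a))
    (hδunif : Measure.map δ P =
      (ENNReal.ofReal (2 * ε))⁻¹ • volume.restrict (Set.Icc (-ε) ε)) :
    Measure.map (fun ω => r (X ω + δ ω)) P =
      (ENNReal.ofReal (2 * a))⁻¹ • volume.restrict (Set.Icc (-a) a) := by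
  have hT : Measurable fun p : ℝ × ℝ => r (p.1 + p.2) :=
    hr_cont.measurable.comp (measurable_fst.add measurable_snd)
  have hpair : Measurable fun ω => (X ω, δ ω) := hX.prodMk hδ
  have hmap_pair :=
    (indepFun_iff_map_prod_eq_prod_map_map hX.aemeasurable hδ.aemeasurable).1 hXδ
  have hcomp : (fun ω => r (X ω + δ ω))
      = (fun p : ℝ × ℝ => r (p.1 + p.2)) ∘ (fun ω => (X ω, δ ω)) := rfl
  rw [hcomp, ← Measure.map_map hT hpair, hmap_pair, hXunif, hδunif]
  set μ₀ : Measure ℝ := volume.restrict (Set.Icc (-a) a) with hμ₀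
  set ν₀ : Measure ℝ := (ENNReal.ofReal (2 * ε))⁻¹ • volume.restrict (Set.Icc (-ε) ε) with hν₀
  have hν₀univ : ν₀ Set.univ = 1 := by
    rw [hν₀]
    rw [Measure.smul_apply, Measure.restrict_apply_univ, Real.volume_Icc, smul_eq_mul]
    have h2 : ε - -ε = 2 * ε := by ring
    rw [h2]
    exact ENNReal.inv_mul_cancel (by positivity) ENNReal.ofReal_ne_top
  haveI hν₀fin : IsFiniteMeasure ν₀ := ⟨by rw [hν₀univ]; exact ENNReal.one_lt_top⟩
  haveI hμ₀fin : IsFiniteMeasure μ₀ := by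
    refine ⟨?_⟩
    rw [hμ₀, Measure.restrict_apply_univ, Real.volume_Icc]
    exact ENNReal.ofReal_lt_top
  haveI : IsFiniteMeasure ((ENNReal.ofReal (2 * a))⁻¹ • μ₀) := by
    refine ⟨?_⟩
    rw [Measure.smul_apply, smul_eq_mul]
    exact ENNReal.mul_lt_top (by simp [ha]) (measure_lt_top _ _)
  have hsmul_prod : ((ENNReal.ofReal (2 * a))⁻¹ • μ₀).prod ν₀
      = (ENNReal.ofReal (2 * a))⁻¹ • (μ₀.prod ν₀) := by
    refine Measure.prod_eq fun s t hs ht => ?_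
    simp only [Measure.smul_apply, Measure.prod_prod, smul_eq_mul]
    ring
  rw [hsmul_prod, Measure.map_smul]
  suffices h : Measure.map (fun p : ℝ × ℝ => r (p.1 + p.2)) (μ₀.prod ν₀) = μ₀ by rw [h]
  -- symmetrization
  have hm : Measurable fun x : ℝ => 2 * a - x := by fun_prop
  have hνneg : Measure.map Neg.neg ν₀ = ν₀ := by
    rw [hν₀, Measure.map_smul]
    congr 1
    ext A hA
    rw [Measure.map_apply measurable_neg hA, Measure.restrict_apply (measurable_neg hA),
      Measure.restrict_apply hA]
    have hpre : Set.Icc (-ε) ε = Neg.neg ⁻¹' Set.Icc (-ε) ε := by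
      ext x
      simp only [Set.mem_preimage, Set.mem_Icc]
      constructor <;> intro h <;> constructor <;> linarith [h.1, h.2]
    conv_lhs => rw [hpre, ← Set.preimage_inter]
    rw [Measure.measure_preimage_neg]
  have hμ₂ : Measure.map (fun x => 2 * a - x) μ₀ = volume.restrict (Set.Icc a (3 * a)) := by
    ext A hA
    rw [Measure.map_apply hm hA, Measure.restrict_apply (hm hA), Measure.restrict_apply hA]
    have hIcc : Set.Icc (-a) a = (fun x => 2 * a - x) ⁻¹' Set.Icc a (3 * a) := by
      rw [Set.preimage_const_sub_Icc]
      congr 1 <;> ring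
    conv_lhs => rw [hIcc, ← Set.preimage_inter]
    have hcomp2 : (fun x : ℝ => 2 * a - x) = (fun x : ℝ => 2 * a + x) ∘ Neg.neg := by
      funext x; simp [sub_eq_add_neg]
    rw [hcomp2, Set.preimage_comp, Measure.measure_preimage_neg, measure_preimage_add]
  have hSmap : Measure.map (Prod.map (fun x => 2 * a - x) Neg.neg) (μ₀.prod ν₀)
      = (volume.restrict (Set.Icc a (3 * a))).prod ν₀ := by
    rw [← Measure.map_prod_map _ _ hm measurable_neg, hμ₂, hνneg]
  have hTS : (fun p : ℝ × ℝ => r (p.1 + p.2)) ∘ (Prod.map (fun x => 2 * a - x) Neg.neg)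
      = fun p : ℝ × ℝ => r (p.1 + p.2) := by
    funext p
    show r (2 * a - p.1 + -p.2) = r (p.1 + p.2)
    have h1 : 2 * a - p.1 + -p.2 = 2 * a - (p.1 + p.2) := by ring
    rw [h1, ← br_refl_all hr_id hr_right]
  have hsym : Measure.map (fun p : ℝ × ℝ => r (p.1 + p.2))
        ((volume.restrict (Set.Icc a (3 * a))).prod ν₀)
      = Measure.map (fun p : ℝ × ℝ => r (p.1 + p.2)) (μ₀.prod ν₀) := by
    rw [← hSmap, Measure.map_map hT (hm.prodMap measurable_neg), hTS]
  have hsum : μ₀.prod ν₀ + (volume.restrict (Set.Icc a (3 * a))).prod ν₀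
      = (volume.restrict (Set.Ioc (-a) (3 * a))).prod ν₀ := by
    rw [← Measure.add_prod]
    congr 1
    rw [hμ₀, Measure.restrict_congr_set Ioc_ae_eq_Icc.symm,
      Measure.restrict_congr_set (s := Set.Icc a (3*a)) Ioc_ae_eq_Icc.symm,
      ← Measure.restrict_union (Set.Ioc_disjoint_Ioc_of_le le_rfl) measurableSet_Ioc,
      Set.Ioc_union_Ioc_eq_Ioc (by linarith) (by linarith)]
  have hkey := br_keyD ha hr_cont hr_id hr_right hr_left ν₀ hν₀univ
  have h2 : (2 : ℝ≥0∞) • Measure.map (fun p : ℝ × ℝ => r (p.1 + p.2)) (μ₀.prod ν₀)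
      = (2 : ℝ≥0∞) • μ₀ := by
    rw [two_smul, two_smul]
    calc Measure.map (fun p : ℝ × ℝ => r (p.1 + p.2)) (μ₀.prod ν₀)
          + Measure.map (fun p : ℝ × ℝ => r (p.1 + p.2)) (μ₀.prod ν₀)
        = Measure.map (fun p : ℝ × ℝ => r (p.1 + p.2)) (μ₀.prod ν₀)
          + Measure.map (fun p : ℝ × ℝ => r (p.1 + p.2))
              ((volume.restrict (Set.Icc a (3 * a))).prod ν₀) := by rw [hsym]
      _ = Measure.map (fun p : ℝ × ℝ => r (p.1 + p.2))
            (μ₀.prod ν₀ + (volume.restrict (Set.Icc a (3 * a))).prod ν₀) := by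
          rw [Measure.map_add _ _ hT]
      _ = Measure.map (fun p : ℝ × ℝ => r (p.1 + p.2))
            ((volume.restrict (Set.Ioc (-a) (3 * a))).prod ν₀) := by rw [hsum]
      _ = (2 : ℝ≥0∞) • volume.restrict (Set.Icc (-a) a) := hkey
      _ = μ₀ + μ₀ := by rw [← hμ₀]; exact two_smul _ _
  ext s hs
  have h3 := congrArg (fun m : Measure ℝ => m s) h2
  simp only [Measure.smul_apply, smul_eq_mul] at h3
  exact (ENNReal.mul_right_inj (by norm_num) (by norm_num)).1 h3
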